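/- Fix a partition of the vertices of Q_n into two disjoint (n-1)-dimensional subcubes S_1 and S_2, choose canonical labellings of S_1 and S_2, and integers z_1, z_2 ∈ {0,1,2}. Colour a vertex in layer m of S_i red if m ≡ z_i (mod 3) and blue otherwise. Then the resulting colouring of Q_n contains no 3-dimensional subcube in which seven specified vertices (all but one corner) are blue; i.e. the colouring is B_3^--free. -/

import Mathlib

/-- The hypercube graph `Q_n` on `{0,1}^n`. -/
def Qcube (n : ℕ) : SimpleGraph (Fin n → Bool) where
  Adj x y := hammingDist x y = 1
  symm := ⟨fun x y h => by change hammingDist x y = 1 at h; change hammingDist y x = 1; rwa [hammingDist_comm]⟩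
  loopless := ⟨fun x h => by change hammingDist x x = 1 at h; simp [hammingDist_self] at h⟩

/-- The Hamming weight (layer) of a vertex of the hypercube. -/
def wt {n : ℕ} (x : Fin n → Bool) : ℕ := (Finset.univ.filter fun i => x i = true).card

/-- Flip coordinate `i`. -/
def flipN {N : ℕ} (i : Fin N) (x : Fin N → Bool) : Fin N → Bool :=
  fun c => xor (decide (c = i)) (x c)

lemma flipN_self {N} (i : Fin N) (x : Fin N → Bool) : flipN i x i = !x i := by
  simp [flipN]

lemma flipN_ne {N} {i c : Fin N} (h : c ≠ i) (x : Fin N → Bool) : flipN i x c = x c := by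
  simp [flipN, h]

lemma flipN_flipN {N} (i : Fin N) (x : Fin N → Bool) : flipN i (flipN i x) = x := by
  funext c; simp [flipN, Bool.xor_assoc]

lemma flipN_comm {N} (i k : Fin N) (x : Fin N → Bool) :
    flipN i (flipN k x) = flipN k (flipN i x) := by
  funext c; simp [flipN]; rw [← Bool.xor_assoc, ← Bool.xor_assoc, Bool.xor_comm (decide (c = i))]

lemma flipN_apply_ne_iff {N} (i c : Fin N) (x : Fin N → Bool) :
    (flipN i x c ≠ x c) ↔ c = i := by
  by_cases hc : c = i
  · subst hc; rw [flipN_self]; simp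
  · rw [flipN_ne hc]; simp [hc]

lemma hd_flip {N} (i : Fin N) (x : Fin N → Bool) : hammingDist x (flipN i x) = 1 := by
  unfold hammingDist
  rw [Finset.card_eq_one]
  refine ⟨i, ?_⟩
  ext c
  simp only [Finset.mem_filter, Finset.mem_univ, true_and, Finset.mem_singleton]
  constructor
  · intro h
    by_contra hc
    exact h (flipN_ne hc x).symm
  · rintro rfl
    rw [flipN_self]
    simp

lemma exists_flip {N} {x y : Fin N → Bool} (h : hammingDist x y = 1) : ∃ i, y = flipN i x := by
  unfold hammingDist at h
  rw [Finset.card_eq_one] at h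
  obtain ⟨i, hi⟩ := h
  refine ⟨i, funext fun c => ?_⟩
  by_cases hc : c = i
  · subst hc
    have : x c ≠ y c := by
      have : c ∈ Finset.univ.filter fun a => x a ≠ y a := by rw [hi]; simp
      simpa using this
    rw [flipN_self]
    cases hx : x c <;> cases hy : y c <;> simp_all
  · have : ¬ (x c ≠ y c) := by
      intro hne
      have : c ∈ Finset.univ.filter fun a => x a ≠ y a := by simp [hne]
      rw [hi] at this; simp at this; exact hc this
    rw [flipN_ne hc]
    tauto

lemma wt_flip {N} (i : Fin N) (x : Fin N → Bool) :
    (x i = true ∧ wt x = wt (flipN i x) + 1) ∨ (x i = false ∧ wt (flipN i x) = wt x + 1) := by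
  cases hx : x i
  · right
    refine ⟨rfl, ?_⟩
    have hset : (Finset.univ.filter fun c => flipN i x c = true)
        = insert i (Finset.univ.filter fun c => x c = true) := by
      ext c
      by_cases hc : c = i
      · subst hc; simp [flipN_self, hx]
      · simp [flipN_ne hc, hc]
    rw [wt, hset, Finset.card_insert_of_notMem (by simp [hx])]
    rfl
  · left
    refine ⟨rfl, ?_⟩
    have hset : (Finset.univ.filter fun c => x c = true)
        = insert i (Finset.univ.filter fun c => flipN i x c = true) := by
      ext c
      by_cases hc : c = i
      · subst hc; simp [flipN_self, hx]
      · simp [flipN_ne hc, hc]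
    rw [wt, hset, Finset.card_insert_of_notMem (by simp [flipN_self, hx])]
    rfl

lemma sqlem {N} {y1 y2 y3 y4 : Fin N → Bool} {c1 c2 c3 c4 : Fin N}
    (h12 : y2 = flipN c1 y1) (h23 : y3 = flipN c2 y2)
    (h34 : y4 = flipN c3 y3) (h41 : y1 = flipN c4 y4)
    (h13 : y1 ≠ y3) (h24 : y2 ≠ y4) : c3 = c1 ∧ c4 = c2 := by
  have hne12 : c1 ≠ c2 := by
    intro h; subst h
    have : y3 = y1 := by rw [h23, h12, flipN_flipN]
    exact h13 this.symm
  have hne23 : c2 ≠ c3 := by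
    intro h; subst h
    have : y4 = y2 := by rw [h34, h23, flipN_flipN]
    exact h24 this.symm
  have key : ∀ c : Fin N,
      ((decide (c = c1) : Bool) ^^ (decide (c = c2) ^^ (decide (c = c3) ^^ decide (c = c4)))) = false := by
    intro c
    have h := congrFun h41 c
    rw [h34, h23, h12] at h
    simp only [flipN] at h
    cases hc : y1 c <;> rw [hc] at h <;>
      · revert h
        cases (decide (c = c1)) <;> cases (decide (c = c2)) <;> cases (decide (c = c3)) <;>
          cases (decide (c = c4)) <;> simp
  have h31 : c3 = c1 := by
    by_contra h31
    have k1 := key c1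
    rw [decide_eq_true (rfl : c1 = c1), decide_eq_false hne12,
      decide_eq_false (fun h => h31 h.symm : ¬ c1 = c3)] at k1
    have h14 : c1 = c4 := by
      by_contra h14
      rw [decide_eq_false h14] at k1
      simp at k1
    have k3 := key c3
    rw [decide_eq_false (fun h => h31 h : ¬ c3 = c1),
      decide_eq_false (fun h => hne23 h.symm : ¬ c3 = c2),
      decide_eq_true (rfl : c3 = c3)] at k3
    have h34' : c3 = c4 := by
      by_contra hx
      rw [decide_eq_false hx] at k3
      simp at k3
    exact h31 (h34'.trans h14.symm)
  refine ⟨h31, ?_⟩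
  by_contra h42
  have k2 := key c2
  rw [decide_eq_false (fun h => hne12 h.symm : ¬ c2 = c1),
    decide_eq_true (rfl : c2 = c2),
    decide_eq_false hne23,
    decide_eq_false (fun h => h42 h.symm : ¬ c2 = c4)] at k2
  simp at k2

lemma cycle_res {N} {y1 y2 y3 y4 : Fin N → Bool}
    (h12 : hammingDist y1 y2 = 1) (h23 : hammingDist y2 y3 = 1)
    (h34 : hammingDist y3 y4 = 1) (h41 : hammingDist y4 y1 = 1)
    (h13 : y1 ≠ y3) (h24 : y2 ≠ y4) {z : ℕ} (hz : z < 3) :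
    wt y1 % 3 = z ∨ wt y2 % 3 = z ∨ wt y3 % 3 = z ∨ wt y4 % 3 = z := by
  obtain ⟨c1, e12⟩ := exists_flip h12
  obtain ⟨c2, e23⟩ := exists_flip h23
  obtain ⟨c3, e34⟩ := exists_flip h34
  obtain ⟨c4, e41⟩ := exists_flip h41
  obtain ⟨hc31, hc42⟩ := sqlem e12 e23 e34 e41 h13 h24
  rw [hc31] at e34; rw [hc42] at e41
  have hne12 : c1 ≠ c2 := by
    intro h; subst h
    have : y3 = y1 := by rw [e23, e12, flipN_flipN]
    exact h13 this.symm
  have e31 : y3 c1 = !y1 c1 := by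
    rw [e23, flipN_ne hne12, e12, flipN_self]
  have e42 : y4 c2 = !y2 c2 := by
    rw [e34, flipN_ne hne12.symm, e23, flipN_self]
  have rel12 := wt_flip c1 y1; rw [← e12] at rel12
  have rel23 := wt_flip c2 y2; rw [← e23] at rel23
  have rel34 := wt_flip c1 y3; rw [← e34] at rel34
  have rel41 := wt_flip c2 y4; rw [← e41] at rel41
  rcases rel12 with ⟨hp, w12⟩ | ⟨hp, w12⟩ <;>
  rcases rel23 with ⟨hq, w23⟩ | ⟨hq, w23⟩ <;>
  rcases rel34 with ⟨hr, w34⟩ | ⟨hr, w34⟩ <;>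
  rcases rel41 with ⟨hs, w41⟩ | ⟨hs, w41⟩ <;>
    rw [e31, hp] at hr <;> rw [e42, hq] at hs <;> simp at hr hs <;> omega

lemma chain3 {P : (Fin 3 → Bool) → Prop} (a a' : Fin 3 → Bool)
    (h : ∀ l x, a l = x l → x l ≠ a' l → (P x ↔ P (flipN l x))) : P a ↔ P a' := by
  have step : ∀ l x, a l = x l → (P x ↔ P (Function.update x l (a' l))) := by
    intro l x hal
    by_cases hx : x l = a' l
    · rw [← hx, Function.update_eq_self]
    · have he : Function.update x l (a' l) = flipN l x := by
        funext c
        by_cases hc : c = l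
        · subst hc
          rw [Function.update_self, flipN_self]
          cases h1 : x c <;> cases h2 : a' c <;> simp_all
        · rw [Function.update_of_ne hc, flipN_ne hc]
      rw [he]
      exact h l x hal hx
  have s0 := step 0 a rfl
  have s1 := step 1 (Function.update a 0 (a' 0))
    (by rw [Function.update_of_ne (by decide)])
  have s2 := step 2 (Function.update (Function.update a 0 (a' 0)) 1 (a' 1))
    (by rw [Function.update_of_ne (by decide), Function.update_of_ne (by decide)])
  have hfin : Function.update (Function.update (Function.update a 0 (a' 0)) 1 (a' 1)) 2 (a' 2) = a' := by
    funext c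
    fin_cases c <;> simp [Function.update]
  rw [hfin] at s2
  rw [s0, s1, s2]

/-- Partition `Q_n` into two disjoint `(n-1)`-dimensional subcubes `S_false`,
`S_true` (the halves `{x : x j = b}` for a coordinate `j`), choose canonical
labellings `g b : Q_{n-1} ≃ S_b`, and residues `z b ∈ {0,1,2}`.  Colour a vertex
in layer `m` of `S_b` red if `m ≡ z b (mod 3)` and blue otherwise.  Then the
resulting colouring of `Q_n` is `B_3^-`-free: there is no 3-dimensional subcube
in which all vertices but one corner are blue. -/
theorem stmt15 (n : ℕ) (hn : 1 ≤ n) (j : Fin n)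
    (g : Bool → (Fin (n - 1) → Bool) → (Fin n → Bool))
    (hginj : ∀ b, Function.Injective (g b))
    (hgrange : ∀ b, Set.range (g b) = {x : Fin n → Bool | x j = b})
    (hgadj : ∀ b x y, (Qcube (n - 1)).Adj x y ↔ (Qcube n).Adj (g b x) (g b y))
    (z : Bool → ℕ) (hz : ∀ b, z b < 3)
    (Blue : (Fin n → Bool) → Prop)
    (hBlue : ∀ b y, Blue (g b y) ↔ ¬ (wt y % 3 = z b)) :
    ¬ ∃ (f : (Fin 3 → Bool) → (Fin n → Bool)) (v₀ : Fin 3 → Bool),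
      Function.Injective f ∧
      (∀ a b, (Qcube 3).Adj a b → (Qcube n).Adj (f a) (f b)) ∧
      ∀ a, a ≠ v₀ → Blue (f a) := by
  rintro ⟨f, v₀, hinj, hadj, hblue⟩
  have hstep : ∀ (l : Fin 3) (a : Fin 3 → Bool), hammingDist (f a) (f (flipN l a)) = 1 :=
    fun l a => hadj a (flipN l a) (hd_flip l a)
  -- distinctness of diagonal vertices in a square
  have hane : ∀ (k l : Fin 3) (a : Fin 3 → Bool), k ≠ l → a ≠ flipN l (flipN k a) := by
    intro k l a hkl h
    have := congrFun h k
    rw [flipN_ne hkl, flipN_self] at this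
    simp at this
  have haneside : ∀ (k l : Fin 3) (a : Fin 3 → Bool), k ≠ l → flipN k a ≠ flipN l a := by
    intro k l a hkl h
    have := congrFun h k
    rw [flipN_self, flipN_ne hkl] at this
    simp at this
  -- crossing invariance along the other directions
  have crossB : ∀ (k l : Fin 3) (a : Fin 3 → Bool), k ≠ l →
      ((f (flipN k a) j ≠ f a j) ↔ (f (flipN k (flipN l a)) j ≠ f (flipN l a) j)) := by
    intro k l a hkl
    obtain ⟨c1, e12⟩ := exists_flip (hstep k a)
    obtain ⟨c2, e23⟩ := exists_flip (hstep l (flipN k a))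
    have h34' : hammingDist (f (flipN l (flipN k a))) (f (flipN l a)) = 1 := by
      have := hstep k (flipN l a)
      rw [flipN_comm k l] at this
      rw [hammingDist_comm]
      exact this
    obtain ⟨c3, e34⟩ := exists_flip h34'
    have h41' : hammingDist (f (flipN l a)) (f a) = 1 := by
      rw [hammingDist_comm]; exact hstep l a
    obtain ⟨c4, e41⟩ := exists_flip h41'
    have h13' : f a ≠ f (flipN l (flipN k a)) := fun h => hane k l a hkl (hinj h)
    have h24' : f (flipN k a) ≠ f (flipN l a) := fun h => haneside k l a hkl (hinj h)
    obtain ⟨hc31, _⟩ := sqlem e12 e23 e34 e41 h13' h24'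
    have hL : (f (flipN k a) j ≠ f a j) ↔ j = c1 := by
      rw [e12]; exact flipN_apply_ne_iff c1 j (f a)
    have hR : (f (flipN k (flipN l a)) j ≠ f (flipN l a) j) ↔ j = c3 := by
      rw [flipN_comm k l, e34, ne_comm]
      exact flipN_apply_ne_iff c3 j (f (flipN l (flipN k a)))
    rw [hL, hR, hc31]
  -- two crossings in different directions around a corner are impossible
  have crossC : ∀ (k l : Fin 3) (a : Fin 3 → Bool), k ≠ l →
      f (flipN k a) j ≠ f a j → f (flipN l (flipN k a)) j ≠ f (flipN k a) j → False := by
    intro k l a hkl hk hl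
    obtain ⟨c1, e12⟩ := exists_flip (hstep k a)
    obtain ⟨c2, e23⟩ := exists_flip (hstep l (flipN k a))
    rw [e12] at hk
    have hc1 : j = c1 := (flipN_apply_ne_iff c1 j (f a)).mp hk
    rw [e23] at hl
    have hc2 : j = c2 := (flipN_apply_ne_iff c2 j (f (flipN k a))).mp hl
    have heq : f (flipN l (flipN k a)) = f a := by
      rw [e23, e12, ← hc1, ← hc2, flipN_flipN]
    exact hane k l a hkl (hinj heq).symm
  -- the key claim: there is a direction k0 such that the half containing f a
  -- depends only on a k0
  obtain ⟨k0, hk0⟩ : ∃ k0 : Fin 3, ∀ a a' : Fin 3 → Bool, a k0 = a' k0 → f a j = f a' j := by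
    by_cases hcr : ∃ (l : Fin 3) (a : Fin 3 → Bool), f (flipN l a) j ≠ f a j
    · obtain ⟨k0, a0, hk0a⟩ := hcr
      refine ⟨k0, ?_⟩
      have inv : ∀ (l : Fin 3) (x : Fin 3 → Bool),
          (f (flipN k0 x) j ≠ f x j) ↔ (f (flipN k0 (flipN l x)) j ≠ f (flipN l x) j) := by
        intro l x
        by_cases hlk : k0 = l
        · subst hlk
          rw [flipN_flipN]
          exact ne_comm
        · exact crossB k0 l x hlk
      have crossall : ∀ x : Fin 3 → Bool, f (flipN k0 x) j ≠ f x j := by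
        intro x
        exact (chain3 (P := fun y => f (flipN k0 y) j ≠ f y j) a0 x
          (fun l y _ _ => inv l y)).mp hk0a
      have nocross : ∀ l, l ≠ k0 → ∀ x : Fin 3 → Bool, f (flipN l x) j = f x j := by
        intro l hl x
        by_contra hx
        exact crossC l k0 x hl hx (crossall (flipN l x))
      intro a a' haa
      refine ((chain3 (P := fun y => f y j = f a j) a a' ?_).mp rfl).symm
      intro l x hal hxa'
      have hlne : l ≠ k0 := by
        rintro rfl
        exact hxa' (hal.symm.trans haa)
      show (f x j = f a j) ↔ (f (flipN l x) j = f a j)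
      rw [nocross l hlne x]
    · push_neg at hcr
      refine ⟨0, fun a a' _ => ?_⟩
      exact ((chain3 (P := fun y => f y j = f a j) a a'
        (fun l x _ _ => by
          show (f x j = f a j) ↔ (f (flipN l x) j = f a j)
          rw [hcr l x])).mp rfl).symm
  -- each face a k0 = β contains v₀
  have face : ∀ β : Bool, ∃ a : Fin 3 → Bool, a k0 = β ∧ a = v₀ := by
    intro β
    have h3 : ∀ k : Fin 3, ∃ l1 l2 : Fin 3, l1 ≠ l2 ∧ l1 ≠ k ∧ l2 ≠ k := by decide
    obtain ⟨l1, l2, hl12, hl1k, hl2k⟩ := h3 k0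
    -- the four vertices of the face
    set a1 : Fin 3 → Bool := fun _ => β with ha1
    set a2 := flipN l1 a1 with ha2
    set a3 := flipN l2 a2 with ha3
    set a4 := flipN l1 a3 with ha4
    have hcyc : flipN l2 a4 = a1 := by
      rw [ha4, ha3, ha2]
      funext c
      simp only [flipN]
      cases (decide (c = l1)) <;> cases (decide (c = l2)) <;> simp
    have k1 : a1 k0 = β := rfl
    have k2 : a2 k0 = β := by rw [ha2, flipN_ne (Ne.symm hl1k)]
    have k3 : a3 k0 = β := by rw [ha3, flipN_ne (Ne.symm hl2k)]; exact k2
    have k4 : a4 k0 = β := by rw [ha4, flipN_ne (Ne.symm hl1k)]; exact k3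
    set b := f a1 j with hb
    have hb1 : f a1 j = b := rfl
    have hb2 : f a2 j = b := hk0 a2 a1 (k2.trans k1.symm)
    have hb3 : f a3 j = b := hk0 a3 a1 (k3.trans k1.symm)
    have hb4 : f a4 j = b := hk0 a4 a1 (k4.trans k1.symm)
    have mem : ∀ (a : Fin 3 → Bool), f a j = b → ∃ y, g b y = f a := by
      intro a hab
      have : f a ∈ Set.range (g b) := by rw [hgrange]; exact hab
      exact this
    obtain ⟨y1, gy1⟩ := mem a1 hb1
    obtain ⟨y2, gy2⟩ := mem a2 hb2
    obtain ⟨y3, gy3⟩ := mem a3 hb3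
    obtain ⟨y4, gy4⟩ := mem a4 hb4
    have hQadj : ∀ (ya yb : Fin (n-1) → Bool) (aa ab : Fin 3 → Bool),
        g b ya = f aa → g b yb = f ab → hammingDist (f aa) (f ab) = 1 →
        hammingDist ya yb = 1 := by
      intro ya yb aa ab hga hgb hd
      have : (Qcube n).Adj (g b ya) (g b yb) := by rw [hga, hgb]; exact hd
      exact (hgadj b ya yb).mpr this
    have hy12 : hammingDist y1 y2 = 1 := hQadj y1 y2 a1 a2 gy1 gy2 (hstep l1 a1)
    have hy23 : hammingDist y2 y3 = 1 := hQadj y2 y3 a2 a3 gy2 gy3 (hstep l2 a2)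
    have hy34 : hammingDist y3 y4 = 1 := hQadj y3 y4 a3 a4 gy3 gy4 (hstep l1 a3)
    have hy41 : hammingDist y4 y1 = 1 := by
      refine hQadj y4 y1 a4 a1 gy4 gy1 ?_
      have := hstep l2 a4
      rw [hcyc] at this
      exact this
    have hy13 : y1 ≠ y3 := by
      intro h
      have : f a1 = f a3 := by rw [← gy1, ← gy3, h]
      exact hane l1 l2 a1 hl12 (hinj this)
    have hy24 : y2 ≠ y4 := by
      intro h
      have : f a2 = f a4 := by rw [← gy2, ← gy4, h]
      have ha24 : a2 ≠ a4 := by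
        intro hh
        have := congrFun hh l2
        rw [ha4, ha3, flipN_ne (Ne.symm hl12), flipN_self] at this
        simp at this
      exact ha24 (hinj this)
    have key := cycle_res hy12 hy23 hy34 hy41 hy13 hy24 (hz b)
    have getv : ∀ (y : Fin (n-1) → Bool) (a : Fin 3 → Bool),
        g b y = f a → wt y % 3 = z b → a = v₀ := by
      intro y a hga hw
      by_contra hne
      have hB := hblue a hne
      rw [← hga] at hB
      exact (hBlue b y).mp hB hw
    rcases key with h | h | h | h
    · exact ⟨a1, k1, getv y1 a1 gy1 h⟩
    · exact ⟨a2, k2, getv y2 a2 gy2 h⟩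
    · exact ⟨a3, k3, getv y3 a3 gy3 h⟩
    · exact ⟨a4, k4, getv y4 a4 gy4 h⟩
  obtain ⟨aF, hFk, hFv⟩ := face false
  obtain ⟨aT, hTk, hTv⟩ := face true
  rw [hFv] at hFk
  rw [hTv] at hTk
  rw [hFk] at hTk
  exact Bool.noConfusion hTk
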